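/- In the free monoid C* on the alphabet C = {x, y, e_1, …, e_n}, the relations e_{i+1} y = y e_i, for 1 ≤ i ≤ n−1, are consequences of the relations U_2 through U_5. -/
import Mathlib

/-! The alphabet `C = {x, y, e_1, …, e_n}` (with `n + 2` letters), modelled as
`Bool ⊕ Fin n`: `.inl false` is the letter `x`, `.inl true` is the letter `y`,
and `.inr i` is the letter `e_{i+1}`. -/

/-- The free monoid on the alphabet `C = {x, y, e_1, …, e_n}`. -/
abbrev Cw (n : ℕ) := FreeMonoid (Bool ⊕ Fin n)

/-- The letter `x`. -/
def Cx (n : ℕ) : Cw n := FreeMonoid.of (Sum.inl false)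

/-- The letter `y`. -/
def Cy (n : ℕ) : Cw n := FreeMonoid.of (Sum.inl true)

/-- The letter `e_{i+1}` (so `Ce ⟨0,_⟩ = e_1`, …, `Ce ⟨n-1,_⟩ = e_n`). -/
def Ce {n : ℕ} (i : Fin n) : Cw n := FreeMonoid.of (Sum.inr i)

/-- The word `e_1 e_2 ⋯ e_n`. -/
def CeProd (n : ℕ) : Cw n := ((List.finRange n).map Ce).prod

/-- The word `e_2 ⋯ e_n`. -/
def CeProdTail (n : ℕ) : Cw n := (((List.finRange n).drop 1).map Ce).prod

/-- The relations `U_2` to `U_5` of the paper (in `0`-based indexing of the letters `e`):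
`(U_2) xy = e_n` and `yx = e_1`; `(U_3) x e_1 = x` and `e_1 y = y`;
`(U_4) e_i e_j = e_j e_i` for `i < j`; `(U_5) x e_{i+1} = e_i x` for `1 ≤ i ≤ n-1`. -/
inductive Urel2345 (n : ℕ) : Cw n → Cw n → Prop
  | u2a (j : Fin n) : (j : ℕ) = n - 1 → Urel2345 n (Cx n * Cy n) (Ce j)
  | u2b (i : Fin n) : (i : ℕ) = 0 → Urel2345 n (Cy n * Cx n) (Ce i)
  | u3a (i : Fin n) : (i : ℕ) = 0 → Urel2345 n (Cx n * Ce i) (Cx n)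
  | u3b (i : Fin n) : (i : ℕ) = 0 → Urel2345 n (Ce i * Cy n) (Cy n)
  | u4 (i j : Fin n) : i < j → Urel2345 n (Ce i * Ce j) (Ce j * Ce i)
  | u5 (i j : Fin n) : (i : ℕ) + 1 = (j : ℕ) → Urel2345 n (Cx n * Ce j) (Ce i * Cx n)

/-- For `1 ≤ i ≤ n-1`, the relation `e_{i+1} y = y e_i` is a
consequence of the relations `U_2`–`U_5` (here the letter `e_{i+1}` is `Ce ⟨i,_⟩` and
the letter `e_i` is `Ce ⟨i-1,_⟩`, in `0`-based indexing). -/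
theorem Urel2345.consequence_ey (n : ℕ) (hn : 1 ≤ n) (i : ℕ) (h1 : 1 ≤ i)
    (h2 : i ≤ n - 1) :
    conGen (Urel2345 n) (Ce ⟨i, by omega⟩ * Cy n) (Cy n * Ce ⟨i - 1, by omega⟩) := by
  have hn2 : 2 ≤ n := by omega
  set c := conGen (Urel2345 n) with hc
  have base : ∀ a b, Urel2345 n a b → c a b := fun a b h => ConGen.Rel.of a b h
  have hi : i < n := by omega
  have hi1 : i - 1 < n := by omega
  have hn1 : n - 1 < n := by omega
  set a : Fin n := ⟨i, hi⟩
  set b : Fin n := ⟨i - 1, hi1⟩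
  set z : Fin n := ⟨0, by omega⟩
  set t : Fin n := ⟨n - 1, hn1⟩
  -- e_{i+1} y = e_{i+1} e_1 y
  have s1 : c (Ce a * Cy n) (Ce a * (Ce z * Cy n)) :=
    c.mul (c.refl _) ((base _ _ (Urel2345.u3b z rfl)).symm)
  -- = e_1 e_{i+1} y
  have s2 : c (Ce a * (Ce z * Cy n)) (Ce z * Ce a * Cy n) := by
    rw [← mul_assoc]
    exact c.mul ((base _ _ (Urel2345.u4 z a (by simp [z, a]; omega))).symm) (c.refl _)
  -- = y x e_{i+1} y
  have s3 : c (Ce z * Ce a * Cy n) (Cy n * (Cx n * Ce a) * Cy n) := by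
    have h := (base _ _ (Urel2345.u2b z rfl)).symm
    rw [show Cy n * (Cx n * Ce a) = Cy n * Cx n * Ce a from (mul_assoc _ _ _).symm]
    exact c.mul (c.mul (c.mul h (c.refl _)) (c.refl _)).symm.symm (c.refl _)
  -- = y e_i x y
  have s4 : c (Cy n * (Cx n * Ce a) * Cy n) (Cy n * (Ce b * Cx n) * Cy n) :=
    c.mul (c.mul (c.refl _) (base _ _ (Urel2345.u5 b a (by simp [a, b]; omega)))) (c.refl _)
  -- = y e_i e_n
  have s5 : c (Cy n * (Ce b * Cx n) * Cy n) (Cy n * Ce b * Ce t) := by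
    have h := base _ _ (Urel2345.u2a t rfl)
    rw [show Cy n * (Ce b * Cx n) * Cy n = Cy n * Ce b * (Cx n * Cy n) by
      rw [← mul_assoc, ← mul_assoc, mul_assoc (Cy n * Ce b)]]
    exact c.mul (c.refl _) h
  -- = y e_n e_i
  have s6 : c (Cy n * Ce b * Ce t) (Cy n * Ce t * Ce b) := by
    rw [mul_assoc, mul_assoc]
    exact c.mul (c.refl _) (base _ _ (Urel2345.u4 b t (by simp [b, t]; omega)))
  -- = y x y e_i = e_1 y e_i = y e_i
  have s7 : c (Cy n * Ce t * Ce b) (Cy n * (Cx n * Cy n) * Ce b) :=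
    c.mul (c.mul (c.refl _) (base _ _ (Urel2345.u2a t rfl)).symm) (c.refl _)
  have s8 : c (Cy n * (Cx n * Cy n) * Ce b) (Ce z * Cy n * Ce b) := by
    rw [← mul_assoc]
    exact c.mul (c.mul (base _ _ (Urel2345.u2b z rfl)) (c.refl _)) (c.refl _)
  have s9 : c (Ce z * Cy n * Ce b) (Cy n * Ce b) :=
    c.mul (base _ _ (Urel2345.u3b z rfl)) (c.refl _)
  exact (((((((s1.trans s2).trans s3).trans s4).trans s5).trans s6).trans s7).trans s8).trans s9
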